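/- Suppose $u, v : [0,a] \times [0,b] \to \mathbb{B}$ (a Banach space) are continuous and satisfy, for all $(x,y)$, $|v(x,y) - u(x,y)| \le \varepsilon C_0 + L \int_0^x \psi'(s)(\psi(x)-\psi(s))^{\alpha-1} \sup_{y' \in [0,b]} |v(s,y') - u(s,y')|\, ds$, where $C_0, L, \varepsilon > 0$, $0 < \alpha \le 1$, and $\psi$ is increasing $C^1$ with $\psi' > 0$. Then $\sup_{y \in [0,b]} |v(x,y) - u(x,y)| \le \varepsilon C_0\, \mathbb{E}_\alpha\big(L\, \Gamma(\alpha)(\psi(x)-\psi(0))^{\alpha}\big)$ for all $x \in [0,a]$. -/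

import Mathlib

open Real MeasureTheory intervalIntegral Set

noncomputable def mittagLeffler (α z : ℝ) : ℝ := ∑' k : ℕ, z ^ k / Real.Gamma (α * k + 1)

open Filter Topology

/-- The real Beta integral. -/
lemma betaR {p q : ℝ} (hp : 0 < p) (hq : 0 < q) :
    ∫ τ in (0:ℝ)..1, τ ^ (p - 1) * (1 - τ) ^ (q - 1) =
      Real.Gamma p * Real.Gamma q / Real.Gamma (p + q) := by
  have h := Complex.Gamma_mul_Gamma_eq_betaIntegral (s := (p:ℂ)) (t := (q:ℂ))
    (by simpa using hp) (by simpa using hq)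
  have h2 : Complex.betaIntegral p q =
      ((∫ τ in (0:ℝ)..1, τ ^ (p - 1) * (1 - τ) ^ (q - 1) : ℝ) : ℂ) := by
    rw [Complex.betaIntegral, ← intervalIntegral.integral_ofReal]
    apply intervalIntegral.integral_congr
    intro x hx
    rw [uIcc_of_le zero_le_one] at hx
    beta_reduce
    rw [show ((p:ℂ) - 1) = ((p-1:ℝ):ℂ) by push_cast; ring,
      show ((q:ℂ) - 1) = ((q-1:ℝ):ℂ) by push_cast; ring,
      show (1 - (x:ℂ)) = ((1-x:ℝ):ℂ) by push_cast; ring,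
      ← Complex.ofReal_cpow hx.1, ← Complex.ofReal_cpow (by linarith [hx.2] : (0:ℝ) ≤ 1 - x)]
    push_cast
    ring
  rw [h2, ← Complex.ofReal_add, Complex.Gamma_ofReal, Complex.Gamma_ofReal,
    Complex.Gamma_ofReal] at h
  have hne : Real.Gamma (p + q) ≠ 0 := (Real.Gamma_pos_of_pos (by linarith)).ne'
  have := Complex.ofReal_injective (by exact_mod_cast h)
  field_simp
  linarith [this]

lemma betaR_scaled {p q c₀ c₁ : ℝ} (hp : 0 < p) (hq : 0 < q) (h : c₀ < c₁) :
    ∫ t in c₀..c₁, (c₁ - t) ^ (q - 1) * (t - c₀) ^ (p - 1) =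
      Real.Gamma p * Real.Gamma q / Real.Gamma (p + q) * (c₁ - c₀) ^ (p + q - 1) := by
  have hc0 : 0 < c₁ - c₀ := by linarith
  have key := intervalIntegral.integral_comp_mul_add (a := (0:ℝ)) (b := 1)
      (f := fun t => (c₁ - t) ^ (q - 1) * (t - c₀) ^ (p - 1)) (c := c₁ - c₀) hc0.ne' c₀
  simp only [mul_zero, zero_add, mul_one, sub_add_cancel] at key
  have lhs_eq : (∫ x in (0:ℝ)..1, (c₁ - ((c₁ - c₀) * x + c₀)) ^ (q - 1) * (((c₁ - c₀) * x + c₀) - c₀) ^ (p - 1))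
      = (c₁ - c₀) ^ (q - 1) * (c₁ - c₀) ^ (p - 1) * (Real.Gamma p * Real.Gamma q / Real.Gamma (p + q)) := by
    rw [← betaR hp hq, ← intervalIntegral.integral_const_mul]
    apply intervalIntegral.integral_congr
    intro x hx
    rw [uIcc_of_le zero_le_one] at hx
    beta_reduce
    have h1 : c₁ - ((c₁ - c₀) * x + c₀) = (c₁ - c₀) * (1 - x) := by ring
    have h2 : ((c₁ - c₀) * x + c₀) - c₀ = (c₁ - c₀) * x := by ring
    rw [h1, h2, Real.mul_rpow hc0.le (by linarith [hx.2]), Real.mul_rpow hc0.le hx.1]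
    ring
  have : (∫ t in c₀..c₁, (c₁ - t) ^ (q - 1) * (t - c₀) ^ (p - 1))
      = (c₁ - c₀) * ((c₁ - c₀) ^ (q - 1) * (c₁ - c₀) ^ (p - 1) * (Real.Gamma p * Real.Gamma q / Real.Gamma (p + q))) := by
    rw [lhs_eq, smul_eq_mul, eq_comm, inv_mul_eq_iff_eq_mul₀ hc0.ne'] at key
    exact key
  rw [this, show (c₁ - c₀) ^ (p + q - 1) = (c₁ - c₀) ^ ((1:ℝ) + (q-1) + (p-1)) by ring_nf,
    Real.rpow_add hc0, Real.rpow_add hc0, Real.rpow_one]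
  ring

lemma key_cov {a α : ℝ} (hα : 0 < α) {ψ ψ' : ℝ → ℝ}
    (hψ : ∀ t ∈ Icc 0 a, HasDerivAt ψ (ψ' t) t)
    (hψ'pos : ∀ t ∈ Icc 0 a, 0 < ψ' t)
    (hψmono : StrictMonoOn ψ (Icc 0 a))
    {x : ℝ} (hx : x ∈ Icc 0 a) (γ : ℝ) (hγ : 0 ≤ γ) :
    IntegrableOn (fun s => ψ' s * ((ψ x - ψ s) ^ (α - 1) * (ψ s - ψ 0) ^ γ)) (Ioc 0 x) ∧
    ∫ s in Ioc 0 x, ψ' s * ((ψ x - ψ s) ^ (α - 1) * (ψ s - ψ 0) ^ γ) =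
      Real.Gamma (γ + 1) * Real.Gamma α / Real.Gamma (γ + 1 + α) * (ψ x - ψ 0) ^ (α + γ) := by
  rcases eq_or_lt_of_le hx.1 with rfl | hx0
  · refine ⟨by simp, ?_⟩
    rw [Ioc_self, Measure.restrict_empty, integral_zero_measure, sub_self,
      Real.zero_rpow (by positivity), mul_zero]
  have h0a : (0:ℝ) ∈ Icc 0 a := ⟨le_refl _, hx.1.trans hx.2⟩
  have hsub : Icc (0:ℝ) x ⊆ Icc 0 a := Icc_subset_Icc (le_refl _) hx.2
  have hsub' : Ioo (0:ℝ) x ⊆ Icc 0 a := fun s hs => hsub ⟨hs.1.le, hs.2.le⟩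
  have hcont : ContinuousOn ψ (Icc 0 x) :=
    fun t ht => (hψ t (hsub ht)).continuousAt.continuousWithinAt
  have hψx : ψ 0 < ψ x := hψmono h0a hx hx0
  have himg : ψ '' Ioo 0 x = Ioo (ψ 0) (ψ x) := by
    apply Subset.antisymm
    · rintro _ ⟨s, hs, rfl⟩
      exact ⟨hψmono h0a (hsub' hs) hs.1, hψmono (hsub' hs) hx hs.2⟩
    · exact intermediate_value_Ioo hx.1 hcont
  have hinj : InjOn ψ (Ioo 0 x) := hψmono.injOn.mono hsub'
  have hderiv : ∀ s ∈ Ioo (0:ℝ) x, HasDerivWithinAt ψ (ψ' s) (Ioo 0 x) s :=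
    fun s hs => (hψ s (hsub' hs)).hasDerivWithinAt
  set g : ℝ → ℝ := fun t => (ψ x - t) ^ (α - 1) * (t - ψ 0) ^ γ with hg
  have hgii : IntervalIntegrable g volume (ψ 0) (ψ x) := by
    have h1 : IntervalIntegrable (fun t => (ψ x - t) ^ (α - 1)) volume (ψ 0) (ψ x) := by
      have := (intervalIntegral.intervalIntegrable_rpow' (a := 0) (b := ψ x - ψ 0)
        (show (-1:ℝ) < α - 1 by linarith)).comp_sub_left (ψ x)
      simpa using this.symm
    apply h1.mul_continuousOn
    apply ContinuousOn.rpow_const (continuousOn_id.sub continuousOn_const)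
    exact fun t _ => Or.inr hγ
  have hgi : IntegrableOn g (Ioo (ψ 0) (ψ x)) := by
    rw [← integrableOn_Ioc_iff_integrableOn_Ioo]
    rwa [intervalIntegrable_iff_integrableOn_Ioc_of_le hψx.le] at hgii
  have hiff := integrableOn_image_iff_integrableOn_abs_deriv_smul measurableSet_Ioo hderiv hinj g
  rw [himg] at hiff
  have heqon : ∀ s ∈ Ioo (0:ℝ) x, |ψ' s| • g (ψ s)
      = ψ' s * ((ψ x - ψ s) ^ (α - 1) * (ψ s - ψ 0) ^ γ) := by
    intro s hs
    rw [smul_eq_mul, abs_of_pos (hψ'pos s (hsub' hs))]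
  constructor
  · rw [integrableOn_Ioc_iff_integrableOn_Ioo]
    exact (hiff.mp hgi).congr_fun heqon measurableSet_Ioo
  · rw [integral_Ioc_eq_integral_Ioo, ← setIntegral_congr_fun measurableSet_Ioo heqon,
      ← integral_image_eq_integral_abs_deriv_smul measurableSet_Ioo hderiv hinj g, himg,
      ← integral_Ioc_eq_integral_Ioo, ← intervalIntegral.integral_of_le hψx.le]
    have := betaR_scaled (p := γ + 1) (q := α) (by linarith) hα hψx
    simp only [add_sub_cancel_right] at this
    rw [hg]
    simp only []
    rw [this, show γ + 1 + α - 1 = α + γ by ring]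

noncomputable def mlTerm (α z : ℝ) (k : ℕ) : ℝ := z ^ k / Real.Gamma (α * k + 1)

lemma mittagLeffler_eq_tsum_mlTerm (α z : ℝ) : mittagLeffler α z = ∑' k, mlTerm α z k := rfl

lemma mlTerm_zero (α z : ℝ) : mlTerm α z 0 = 1 := by
  simp [mlTerm, Real.Gamma_one]

lemma mlTerm_eq {α : ℝ} (c : ℝ) {D : ℝ} (hD : 0 ≤ D) (k : ℕ) :
    mlTerm α (c * D ^ α) k = c ^ k / Real.Gamma (α * k + 1) * D ^ (α * k) := by
  simp only [mlTerm]
  rw [mul_pow, ← Real.rpow_natCast (D ^ α) k, ← Real.rpow_mul hD]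
  ring

lemma mlTerm_succ {α D L' : ℝ} (hα : 0 < α) (hD : 0 ≤ D) (k : ℕ) :
    L' * ((L' * Real.Gamma α) ^ k / Real.Gamma (α * k + 1) *
        (Real.Gamma (α * k + 1) * Real.Gamma α / Real.Gamma (α * k + 1 + α) * D ^ (α + α * k)))
      = mlTerm α (L' * Real.Gamma α * D ^ α) (k + 1) := by
  simp only [mlTerm]
  have harg : α * ((k+1 : ℕ) : ℝ) + 1 = α * k + 1 + α := by push_cast; ring
  rw [harg]
  have hDp : (D ^ α) ^ (k+1) = D ^ (α + α * k) := by
    rw [← Real.rpow_natCast (D ^ α) (k+1), ← Real.rpow_mul hD]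
    congr 1; push_cast; ring
  conv_rhs => rw [mul_pow, hDp]
  obtain ⟨G1, hG1, hG1e⟩ : ∃ G1, 0 < G1 ∧ Real.Gamma (α * k + 1) = G1 :=
    ⟨_, Real.Gamma_pos_of_pos (by positivity), rfl⟩
  obtain ⟨G2, hG2, hG2e⟩ : ∃ G2, 0 < G2 ∧ Real.Gamma (α * k + 1 + α) = G2 :=
    ⟨_, Real.Gamma_pos_of_pos (by positivity), rfl⟩
  rw [hG1e, hG2e]
  field_simp
  ring

lemma ml_summable {α : ℝ} (hα : 0 < α) {z : ℝ} (hz : 0 ≤ z) :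
    Summable (fun k : ℕ => mlTerm α z k) := by
  simp only [mlTerm]
  have hΓα : 0 < Real.Gamma α := Real.Gamma_pos_of_pos hα
  set I : ℕ → ℝ := fun k => ∫ τ in Ioo (0:ℝ) 1, τ ^ (α - 1) * (1 - τ) ^ (α * k) with hI
  have hIval : ∀ k : ℕ, I k = Real.Gamma α * Real.Gamma (α * k + 1) / Real.Gamma (α + (α * k + 1)) := by
    intro k
    have := betaR (p := α) (q := α * k + 1) hα (by positivity)
    simp only [add_sub_cancel_right] at this
    rw [hI]
    simp only []
    rw [← integral_Ioc_eq_integral_Ioo, ← intervalIntegral.integral_of_le zero_le_one, this]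
  have hbound_int : IntegrableOn (fun τ : ℝ => τ ^ (α - 1)) (Ioo 0 1) := by
    rw [← integrableOn_Ioc_iff_integrableOn_Ioo]
    exact (intervalIntegral.intervalIntegrable_rpow' (by linarith)).1
  have hItend : Tendsto I atTop (𝓝 0) := by
    have h0 : Tendsto (fun k : ℕ => ∫ τ in Ioo (0:ℝ) 1, τ ^ (α - 1) * (1 - τ) ^ (α * k))
        atTop (𝓝 (∫ τ in Ioo (0:ℝ) 1, (0:ℝ))) := by
      refine MeasureTheory.tendsto_integral_of_dominated_convergence
        (fun τ : ℝ => τ ^ (α - 1)) (fun k => ?_) hbound_int (fun k => ?_) ?_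
      · exact (Measurable.aestronglyMeasurable (by fun_prop))
      · filter_upwards [ae_restrict_mem measurableSet_Ioo] with τ hτ
        have h1 : (0:ℝ) ≤ τ ^ (α - 1) := Real.rpow_nonneg hτ.1.le _
        have h2 : (0:ℝ) ≤ (1 - τ) ^ (α * k) := Real.rpow_nonneg (by linarith [hτ.2]) _
        have h3 : (1 - τ) ^ (α * k) ≤ 1 :=
          Real.rpow_le_one (by linarith [hτ.2]) (by linarith [hτ.1]) (by positivity)
        rw [Real.norm_eq_abs, abs_of_nonneg (by positivity)]
        nlinarith
      · filter_upwards [ae_restrict_mem measurableSet_Ioo] with τ hτ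
        have : Tendsto (fun k : ℕ => (1 - τ) ^ (α * k)) atTop (𝓝 0) := by
          have hbase : Tendsto (fun y : ℝ => (1 - τ) ^ y) atTop (𝓝 0) :=
            tendsto_rpow_atTop_of_base_lt_one _ (by linarith [hτ.1, hτ.2]) (by linarith [hτ.1])
          exact hbase.comp (tendsto_natCast_atTop_atTop.const_mul_atTop hα)
        simpa using tendsto_const_nhds.mul this
    simpa using h0
  have hrat : ∀ᶠ k : ℕ in atTop,
      ‖z ^ (k+1) / Real.Gamma (α * ((k+1 : ℕ) : ℝ) + 1)‖ ≤ (1/2) * ‖z ^ k / Real.Gamma (α * k + 1)‖ := by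
    have hev : ∀ᶠ k : ℕ in atTop, z / Real.Gamma α * I k ≤ 1/2 := by
      have : Tendsto (fun k => z / Real.Gamma α * I k) atTop (𝓝 0) := by
        simpa using hItend.const_mul (z / Real.Gamma α)
      exact this.eventually_le_const (by norm_num)
    filter_upwards [hev] with k hk
    obtain ⟨G1, hG1, hG1e⟩ : ∃ G1, 0 < G1 ∧ Real.Gamma (α * k + 1) = G1 :=
      ⟨_, Real.Gamma_pos_of_pos (by positivity), rfl⟩
    obtain ⟨G2, hG2, hG2e⟩ : ∃ G2, 0 < G2 ∧ Real.Gamma (α * ((k+1 : ℕ) : ℝ) + 1) = G2 :=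
      ⟨_, Real.Gamma_pos_of_pos (by positivity), rfl⟩
    have harg : α + (α * k + 1) = α * ((k+1 : ℕ) : ℝ) + 1 := by push_cast; ring
    have hIk : I k = Real.Gamma α * G1 / G2 := by rw [hIval k, harg, hG1e, hG2e]
    have hr : z / Real.Gamma α * I k = z * G1 / G2 := by
      rw [hIk]; field_simp
    rw [hr] at hk
    rw [Real.norm_eq_abs, Real.norm_eq_abs, hG1e, hG2e,
      abs_of_nonneg (by positivity), abs_of_nonneg (by positivity)]
    have key : z ^ (k+1) / G2 = (z * G1 / G2) * (z ^ k / G1) := by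
      rw [pow_succ]; field_simp
    rw [key]
    have hzk : 0 ≤ z ^ k / G1 := by positivity
    exact mul_le_mul_of_nonneg_right hk hzk
  exact summable_of_ratio_norm_eventually_le (r := 1/2) (by norm_num) hrat

theorem stmt8 {B : Type*} [NormedAddCommGroup B] [NormedSpace ℝ B] [CompleteSpace B]
    (a b α ε C₀ L : ℝ) (ha : 0 < a) (hb : 0 < b) (hα : 0 < α) (hα1 : α ≤ 1)
    (hε : 0 < ε) (hC₀ : 0 < C₀) (hL : 0 < L)
    (ψ ψ' : ℝ → ℝ) (u v : ℝ → ℝ → B)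
    (hψ : ∀ t ∈ Set.Icc 0 a, HasDerivAt ψ (ψ' t) t)
    (hψ'c : ContinuousOn ψ' (Set.Icc 0 a))
    (hψ'pos : ∀ t ∈ Set.Icc 0 a, 0 < ψ' t)
    (hψmono : StrictMonoOn ψ (Set.Icc 0 a))
    (hu : ContinuousOn (fun p : ℝ × ℝ => u p.1 p.2) (Set.Icc 0 a ×ˢ Set.Icc 0 b))
    (hv : ContinuousOn (fun p : ℝ × ℝ => v p.1 p.2) (Set.Icc 0 a ×ˢ Set.Icc 0 b))
    (hineq : ∀ x ∈ Set.Icc 0 a, ∀ y ∈ Set.Icc 0 b,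
      ‖v x y - u x y‖ ≤ ε * C₀ + L * ∫ s in (0:ℝ)..x,
        ψ' s * (ψ x - ψ s) ^ (α - 1) *
          (⨆ y' : Set.Icc (0:ℝ) b, ‖v s y' - u s y'‖)) :
    ∀ x ∈ Set.Icc 0 a,
      (⨆ y' : Set.Icc (0:ℝ) b, ‖v x y' - u x y'‖) ≤
        ε * C₀ * mittagLeffler α (L * Real.Gamma α * (ψ x - ψ 0) ^ α) := by
  haveI hne : Nonempty (Set.Icc (0:ℝ) b) := ⟨⟨0, le_refl _, hb.le⟩⟩
  have hΓα : 0 < Real.Gamma α := Real.Gamma_pos_of_pos hα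
  set φ : ℝ → ℝ := fun s => ⨆ y' : Set.Icc (0:ℝ) b, ‖v s y' - u s y'‖ with hφdef
  obtain ⟨M₀, hM₀⟩ := (isCompact_Icc.prod isCompact_Icc).exists_bound_of_continuousOn (hv.sub hu)
  set M : ℝ := max M₀ 0 with hM
  have hMnn : 0 ≤ M := le_max_right _ _
  have hbdd : ∀ s ∈ Icc (0:ℝ) a, ∀ y' : Set.Icc (0:ℝ) b, ‖v s y' - u s y'‖ ≤ M := by
    intro s hs y'
    exact le_trans (hM₀ (s, (y' : ℝ)) ⟨hs, y'.2⟩) (le_max_left _ _)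
  have hφle : ∀ s ∈ Icc (0:ℝ) a, φ s ≤ M := fun s hs => ciSup_le (hbdd s hs)
  have hφbdd : ∀ s ∈ Icc (0:ℝ) a,
      BddAbove (range fun y' : Set.Icc (0:ℝ) b => ‖v s y' - u s y'‖) :=
    fun s hs => ⟨M, forall_mem_range.mpr (hbdd s hs)⟩
  have hφnn : ∀ s ∈ Icc (0:ℝ) a, 0 ≤ φ s := fun s hs =>
    (norm_nonneg _).trans (le_ciSup (hφbdd s hs) ⟨0, le_refl _, hb.le⟩)
  have hD : ∀ x ∈ Icc (0:ℝ) a, 0 ≤ ψ x - ψ 0 := fun x hx =>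
    sub_nonneg.mpr (hψmono.monotoneOn ⟨le_refl _, ha.le⟩ hx hx.1)
  have step0 : ∀ x ∈ Icc (0:ℝ) a, φ x ≤ ε * C₀ + L * ∫ s in (0:ℝ)..x,
      ψ' s * (ψ x - ψ s) ^ (α - 1) * φ s :=
    fun x hx => ciSup_le fun y' => hineq x hx y' y'.2
  have main : ∀ n : ℕ, ∀ x ∈ Icc (0:ℝ) a,
      φ x ≤ ε * C₀ * (∑ k ∈ Finset.range n, mlTerm α (L * Real.Gamma α * (ψ x - ψ 0) ^ α) k)
        + M * mlTerm α (L * Real.Gamma α * (ψ x - ψ 0) ^ α) n := by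
    intro n
    induction n with
    | zero =>
      intro x hx
      simp only [Finset.range_zero, Finset.sum_empty, mul_zero, zero_add, mlTerm_zero, mul_one]
      exact hφle x hx
    | succ n ih =>
      intro x hx
      have hx0 : (0:ℝ) ≤ x := hx.1
      have hDx : 0 ≤ ψ x - ψ 0 := hD x hx
      set coef : ℕ → ℝ := fun k => if k < n then ε * C₀ * (L * Real.Gamma α) ^ k / Real.Gamma (α * k + 1)
        else M * (L * Real.Gamma α) ^ n / Real.Gamma (α * n + 1) with hcoef
      set V : ℕ → ℝ := fun k => Real.Gamma (α * k + 1) * Real.Gamma α / Real.Gamma (α * k + 1 + α)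
        * (ψ x - ψ 0) ^ (α + α * k) with hV
      have hptB : ∀ s ∈ Icc (0:ℝ) a,
          φ s ≤ ∑ k ∈ Finset.range (n+1), coef k * (ψ s - ψ 0) ^ (α * k) := by
        intro s hs
        have hDs : 0 ≤ ψ s - ψ 0 := hD s hs
        refine (ih s hs).trans_eq ?_
        rw [Finset.sum_range_succ, Finset.mul_sum]
        congr 1
        · refine Finset.sum_congr rfl fun k hk => ?_
          rw [mlTerm_eq _ hDs, hcoef]
          simp only [if_pos (Finset.mem_range.mp hk)]
          ring
        · rw [mlTerm_eq _ hDs, hcoef]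
          simp only [lt_irrefl, if_false]
          ring
      have hkc := fun k : ℕ =>
        key_cov hα hψ hψ'pos hψmono hx (α * k) (by positivity)
      have harg : ∀ k : ℕ, α * (k:ℝ) + 1 = α * k + 1 := fun k => rfl
      have hIle : (∫ s in (0:ℝ)..x, ψ' s * (ψ x - ψ s) ^ (α - 1) * φ s)
          ≤ ∑ k ∈ Finset.range (n+1), coef k * V k := by
        rw [intervalIntegral.integral_of_le hx0]
        have hint : ∀ k : ℕ, IntegrableOn
            (fun s => ψ' s * ((ψ x - ψ s) ^ (α - 1) * (ψ s - ψ 0) ^ (α * k))) (Ioc 0 x) :=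
          fun k => (hkc k).1
        calc (∫ s in Ioc 0 x, ψ' s * (ψ x - ψ s) ^ (α - 1) * φ s)
            ≤ ∫ s in Ioc 0 x, ∑ k ∈ Finset.range (n+1),
                coef k * (ψ' s * ((ψ x - ψ s) ^ (α - 1) * (ψ s - ψ 0) ^ (α * k))) := by
              apply integral_mono_of_nonneg
              · filter_upwards [ae_restrict_mem measurableSet_Ioc] with s hs
                have hs' : s ∈ Icc (0:ℝ) a := ⟨hs.1.le, hs.2.trans hx.2⟩
                have h1 : (0:ℝ) ≤ ψ' s := (hψ'pos s hs').le
                have h2 : (0:ℝ) ≤ (ψ x - ψ s) ^ (α - 1) :=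
                  Real.rpow_nonneg (sub_nonneg.mpr (hψmono.monotoneOn hs' hx hs.2)) _
                exact mul_nonneg (mul_nonneg h1 h2) (hφnn s hs')
              · exact integrable_finset_sum _ (fun k _ => (hint k).const_mul _)
              · filter_upwards [ae_restrict_mem measurableSet_Ioc] with s hs
                have hs' : s ∈ Icc (0:ℝ) a := ⟨hs.1.le, hs.2.trans hx.2⟩
                have h1 : (0:ℝ) ≤ ψ' s := (hψ'pos s hs').le
                have h2 : (0:ℝ) ≤ (ψ x - ψ s) ^ (α - 1) :=
                  Real.rpow_nonneg (sub_nonneg.mpr (hψmono.monotoneOn hs' hx hs.2)) _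
                calc ψ' s * (ψ x - ψ s) ^ (α - 1) * φ s
                    ≤ ψ' s * (ψ x - ψ s) ^ (α - 1) *
                        (∑ k ∈ Finset.range (n+1), coef k * (ψ s - ψ 0) ^ (α * k)) :=
                      mul_le_mul_of_nonneg_left (hptB s hs') (mul_nonneg h1 h2)
                  _ = ∑ k ∈ Finset.range (n+1),
                        coef k * (ψ' s * ((ψ x - ψ s) ^ (α - 1) * (ψ s - ψ 0) ^ (α * k))) := by
                      rw [Finset.mul_sum]
                      exact Finset.sum_congr rfl fun k _ => by ring
          _ = ∑ k ∈ Finset.range (n+1), coef k * V k := by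
              rw [integral_finset_sum _ (fun k _ => (hint k).const_mul _)]
              refine Finset.sum_congr rfl fun k _ => ?_
              rw [MeasureTheory.integral_const_mul, (hkc k).2, hV]
      have hsum_if : ∑ k ∈ Finset.range (n+1), L * (coef k * V k)
          = (∑ k ∈ Finset.range n,
              ε * C₀ * mlTerm α (L * Real.Gamma α * (ψ x - ψ 0) ^ α) (k+1))
            + M * mlTerm α (L * Real.Gamma α * (ψ x - ψ 0) ^ α) (n+1) := by
        rw [Finset.sum_range_succ]
        congr 1
        · refine Finset.sum_congr rfl fun k hk => ?_
          rw [hcoef, hV]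
          simp only [if_pos (Finset.mem_range.mp hk)]
          rw [← mlTerm_succ hα hDx k]
          ring
        · rw [hcoef, hV]
          simp only [lt_irrefl, if_false]
          rw [← mlTerm_succ hα hDx n]
          ring
      calc φ x ≤ ε * C₀ + L * ∫ s in (0:ℝ)..x, ψ' s * (ψ x - ψ s) ^ (α - 1) * φ s :=
            step0 x hx
        _ ≤ ε * C₀ + L * (∑ k ∈ Finset.range (n+1), coef k * V k) :=
            add_le_add_right (mul_le_mul_of_nonneg_left hIle hL.le) _
        _ = ε * C₀ + ∑ k ∈ Finset.range (n+1), L * (coef k * V k) := by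
            rw [Finset.mul_sum]
        _ = ε * C₀ + ((∑ k ∈ Finset.range n,
              ε * C₀ * mlTerm α (L * Real.Gamma α * (ψ x - ψ 0) ^ α) (k+1))
            + M * mlTerm α (L * Real.Gamma α * (ψ x - ψ 0) ^ α) (n+1)) := by
            rw [hsum_if]
        _ = ε * C₀ * (∑ k ∈ Finset.range (n+1),
              mlTerm α (L * Real.Gamma α * (ψ x - ψ 0) ^ α) k)
            + M * mlTerm α (L * Real.Gamma α * (ψ x - ψ 0) ^ α) (n+1) := by
            rw [Finset.sum_range_succ' (fun k => mlTerm α (L * Real.Gamma α * (ψ x - ψ 0) ^ α) k) n,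
              mlTerm_zero, mul_add, Finset.mul_sum]
            ring
  intro x hx
  have hzx : 0 ≤ L * Real.Gamma α * (ψ x - ψ 0) ^ α :=
    mul_nonneg (by positivity) (Real.rpow_nonneg (hD x hx) _)
  have hsum := ml_summable hα hzx
  have h1 : Tendsto (fun n => ∑ k ∈ Finset.range n,
      mlTerm α (L * Real.Gamma α * (ψ x - ψ 0) ^ α) k) atTop
      (𝓝 (mittagLeffler α (L * Real.Gamma α * (ψ x - ψ 0) ^ α))) := by
    rw [mittagLeffler_eq_tsum_mlTerm]
    exact hsum.hasSum.tendsto_sum_nat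
  have h2 : Tendsto (fun n => mlTerm α (L * Real.Gamma α * (ψ x - ψ 0) ^ α) n) atTop (𝓝 0) :=
    hsum.tendsto_atTop_zero
  have h3 : Tendsto (fun n => ε * C₀ * (∑ k ∈ Finset.range n,
      mlTerm α (L * Real.Gamma α * (ψ x - ψ 0) ^ α) k)
      + M * mlTerm α (L * Real.Gamma α * (ψ x - ψ 0) ^ α) n) atTop
      (𝓝 (ε * C₀ * mittagLeffler α (L * Real.Gamma α * (ψ x - ψ 0) ^ α))) := by
    have := (h1.const_mul (ε * C₀)).add (h2.const_mul M)
    simpa using this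
  exact ge_of_tendsto' h3 (fun n => main n x hx)
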